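/- Let k ≥ 1, let T be a finite subset of ℤ^k, let a : ℤ^k → ℂ, and define g : ℝ^k → ℂ by g(θ) = ∑_{t ∈ T} a(t) · ∏_{j=1}^k exp(−i · t_j · θ_j / 2). Suppose λ_1, …, λ_k are natural numbers with |t_j| ≤ λ_j for all t ∈ T and all j, suppose there exists θ ∈ ℝ^k with g(θ) ≠ 0, and let d = (∑_{j=1}^k λ_j) + max_{t ∈ T} ∑_{j=1}^k max(t_j, 0). Then for every finite subset S of [0, 4π), the number of tuples s ∈ S^k with g(s) = 0 is at most d · |S|^{k−1}. Equivalently, if s_1, …, s_k are sampled independently and uniformly from S, then the probability that g(s_1, …, s_k) = 0 is at most d / |S|. -/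

import Mathlib

open Complex Real

private lemma head_tail_inj {n : ℕ} {x y : Fin (n+1) → ℂ}
    (h0 : x 0 = y 0) (ht : Fin.tail x = Fin.tail y) : x = y := by
  rw [← Fin.cons_self_tail x, ← Fin.cons_self_tail y, h0, ht]


open scoped Classical in
lemma sz_aux : ∀ (n : ℕ) (P : MvPolynomial (Fin n) ℂ), P ≠ 0 → ∀ (S : Finset ℂ),
    S.card * ((Fintype.piFinset fun _ : Fin n => S).filter
      fun x => MvPolynomial.eval x P = 0).card ≤ P.totalDegree * S.card ^ n := by
  intro n
  induction n with
  | zero =>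
    intro P hP S
    have h0 : ((Fintype.piFinset fun _ : Fin 0 => S).filter
        fun x => MvPolynomial.eval x P = 0) = ∅ := by
      apply Finset.filter_false_of_mem
      intro x _
      rw [MvPolynomial.eq_C_of_isEmpty P, MvPolynomial.eval_C]
      intro h
      apply hP
      rw [MvPolynomial.eq_C_of_isEmpty P, h, map_zero]
    rw [h0]
    simp
  | succ n ih =>
    intro P hP S
    set Q := MvPolynomial.finSuccEquiv ℂ n P with hQdef
    have hQ0 : Q ≠ 0 := by
      simp only [hQdef, ne_eq, EmbeddingLike.map_eq_zero_iff]
      exact hP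
    set m := Q.natDegree with hm
    set L := Q.leadingCoeff with hLdef
    have hL0 : L ≠ 0 := Polynomial.leadingCoeff_ne_zero.mpr hQ0
    have hdeg : L.totalDegree + m ≤ P.totalDegree := by
      apply MvPolynomial.totalDegree_coeff_finSuccEquiv_add_le
      rw [Polynomial.coeff_natDegree]
      exact hL0
    set Z := (Fintype.piFinset fun _ : Fin (n+1) => S).filter
      (fun x => MvPolynomial.eval x P = 0) with hZdef
    set Z₁ := Z.filter (fun x => MvPolynomial.eval (Fin.tail x) L = 0) with hZ1
    set Z₂ := Z.filter (fun x => ¬ MvPolynomial.eval (Fin.tail x) L = 0) with hZ2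
    have hZcard : Z.card = Z₁.card + Z₂.card :=
      (Finset.card_filter_add_card_filter_not _).symm
    set T₀ := (Fintype.piFinset fun _ : Fin n => S).filter
      (fun x => MvPolynomial.eval x L = 0) with hT0
    -- key: every x ∈ Z has x 0 ∈ S and tail in piFinset
    have hmem : ∀ x ∈ Z, (x 0 ∈ S) ∧ Fin.tail x ∈ (Fintype.piFinset fun _ : Fin n => S) := by
      intro x hx
      rw [hZdef, Finset.mem_filter, Fintype.mem_piFinset] at hx
      refine ⟨hx.1 0, ?_⟩
      rw [Fintype.mem_piFinset]
      intro j; exact hx.1 j.succ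
    -- bound on Z₁
    have hZ1card : Z₁.card ≤ S.card * T₀.card := by
      apply Finset.card_le_mul_card_image_of_maps_to (f := fun x : Fin (n+1) → ℂ => Fin.tail x) (t := T₀)
      · intro x hx
        rw [hZ1, Finset.mem_filter] at hx
        rw [hT0, Finset.mem_filter]
        exact ⟨(hmem x hx.1).2, hx.2⟩
      · intro b _
        apply Finset.card_le_card_of_injOn (fun x => x 0)
        · intro x hx
          rw [Finset.mem_coe, Finset.mem_filter] at hx
          exact (hmem x (Finset.mem_filter.mp hx.1).1).1
        · intro x hx y hy hxy
          rw [Finset.mem_coe, Finset.mem_filter] at hx hy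
          exact head_tail_inj hxy (hx.2.trans hy.2.symm)
    -- bound on Z₂
    have hZ2card : Z₂.card ≤ m * S.card ^ n := by
      calc Z₂.card ≤ m * (Fintype.piFinset fun _ : Fin n => S).card := by
            apply Finset.card_le_mul_card_image_of_maps_to (f := fun x : Fin (n+1) → ℂ => Fin.tail x)
            · intro x hx
              exact (hmem x (Finset.mem_filter.mp hx).1).2
            · intro b _
              by_cases hb : MvPolynomial.eval b L = 0
              · have : (Z₂.filter fun x => Fin.tail x = b) = ∅ := by
                  apply Finset.filter_false_of_mem
                  intro x hx hxb
                  rw [hZ2, Finset.mem_filter] at hx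
                  exact hx.2 (hxb ▸ hb)
                simp [this]
              · -- univariate polynomial argument
                set p := Q.map (MvPolynomial.eval b) with hp
                have hpne : p ≠ 0 := by
                  intro h
                  apply hb
                  have : p.coeff m = 0 := by rw [h]; simp
                  rwa [hp, Polynomial.coeff_map, Polynomial.coeff_natDegree] at this
                apply Finset.card_le_card_of_injOn (fun x => x 0)
                  (t := p.roots.toFinset) ?_ ?_ |>.trans
                · exact (Multiset.toFinset_card_le _).trans
                    ((Polynomial.card_roots' p).trans
                      Polynomial.natDegree_map_le)
                · intro x hx
                  rw [Finset.mem_coe, Finset.mem_filter] at hx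
                  obtain ⟨hxZ2, hxt⟩ := hx
                  rw [hZ2, Finset.mem_filter] at hxZ2
                  obtain ⟨hxZ, _⟩ := hxZ2
                  rw [Finset.mem_coe, Multiset.mem_toFinset, Polynomial.mem_roots hpne]
                  rw [Polynomial.IsRoot, hp, ← hxt, ← MvPolynomial.eval_eq_eval_mv_eval',
                    Fin.cons_self_tail]
                  exact (Finset.mem_filter.mp hxZ).2
                · intro x hx y hy hxy
                  rw [Finset.mem_coe, Finset.mem_filter] at hx hy
                  exact head_tail_inj hxy (hx.2.trans hy.2.symm)
          _ = m * S.card ^ n := by rw [Fintype.card_piFinset]; simp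
    have ihL := ih L hL0 S
    calc S.card * Z.card = S.card * Z₁.card + S.card * Z₂.card := by
          rw [hZcard, Nat.mul_add]
      _ ≤ S.card * (S.card * T₀.card) + S.card * (m * S.card ^ n) := by
          gcongr
      _ ≤ S.card * (L.totalDegree * S.card ^ n) + S.card * (m * S.card ^ n) := by
          gcongr
      _ = (L.totalDegree + m) * S.card ^ (n+1) := by ring
      _ ≤ P.totalDegree * S.card ^ (n+1) := by gcongr


open scoped Classical in
/-- **Probabilistic bound for exponential sums.**
If `g(θ) = ∑_{t ∈ T} a t · ∏_j exp(−i t_j θ_j / 2)` with frequency bounds `|t_j| ≤ λ_j`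
is not identically zero, and
`d = (∑_j λ_j) + max_{t ∈ T} ∑_j max(t_j, 0)`, then for any finite set `S ⊆ [0, 4π)`
the number of grid points `s ∈ S^k` with `g(s) = 0` is at most `d · |S|^(k−1)`;
equivalently, the probability that `g` vanishes at a uniformly random grid point
is at most `d / |S|`. -/
theorem exponential_sum_prob_bound
    (k : ℕ) (hk : 1 ≤ k)
    (T : Finset (Fin k → ℤ)) (a : (Fin k → ℤ) → ℂ)
    (g : (Fin k → ℝ) → ℂ)
    (hg : ∀ θ : Fin k → ℝ,
      g θ = ∑ t ∈ T, a t * ∏ j : Fin k, Complex.exp (-Complex.I * (t j : ℂ) * (θ j : ℂ) / 2))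
    (lam : Fin k → ℕ)
    (hbound : ∀ t ∈ T, ∀ j : Fin k, |t j| ≤ (lam j : ℤ))
    (hne : ∃ θ : Fin k → ℝ, g θ ≠ 0)
    (d : ℕ)
    (hd : d = (∑ j : Fin k, lam j) + T.sup (fun t => ∑ j : Fin k, (t j).toNat))
    (S : Finset ℝ)
    (hS : ∀ s ∈ S, 0 ≤ s ∧ s < 4 * Real.pi) :
    ((Fintype.piFinset fun _ : Fin k => S).filter fun s => g s = 0).card
      ≤ d * S.card ^ (k - 1) := by
  classical
  set z : ℝ → ℂ := fun s => Complex.exp (-Complex.I * s / 2) with hz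
  have hz0 : ∀ s, z s ≠ 0 := fun s => Complex.exp_ne_zero _
  set P : MvPolynomial (Fin k) ℂ :=
    ∑ t ∈ T, MvPolynomial.C (a t) * ∏ j, (MvPolynomial.X j) ^ ((t j + lam j).toNat) with hP
  -- key evaluation identity
  have hkey : ∀ θ : Fin k → ℝ,
      MvPolynomial.eval (fun j => z (θ j)) P = (∏ j, z (θ j) ^ (lam j : ℕ)) * g θ := by
    intro θ
    rw [hg, hP, map_sum, Finset.mul_sum]
    apply Finset.sum_congr rfl
    intro t ht
    have hfac : ∀ j : Fin k, z (θ j) ^ ((t j + lam j).toNat)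
        = z (θ j) ^ (lam j : ℕ) * Complex.exp (-Complex.I * (t j : ℂ) * (θ j : ℂ) / 2) := by
      intro j
      have hnn : (0 : ℤ) ≤ t j + lam j := by
        have h := abs_le.mp (hbound t ht j)
        linarith [h.1]
      have h1 : z (θ j) ^ ((t j + lam j).toNat) = z (θ j) ^ ((t j + lam j : ℤ)) := by
        rw [← zpow_natCast, Int.toNat_of_nonneg hnn]
      rw [h1, zpow_add₀ (hz0 _), zpow_natCast]
      have h2 : z (θ j) ^ (t j : ℤ) = Complex.exp (-Complex.I * (t j : ℂ) * (θ j : ℂ) / 2) := by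
        rw [hz, ← Complex.exp_int_mul]
        ring_nf
      rw [h2]
      ring
    rw [map_mul, MvPolynomial.eval_C, map_prod]
    simp only [map_pow, MvPolynomial.eval_X]
    rw [Finset.prod_congr rfl (fun j _ => hfac j), Finset.prod_mul_distrib]
    ring
  -- P is nonzero
  have hPne : P ≠ 0 := by
    obtain ⟨θ₀, hθ₀⟩ := hne
    intro h
    apply hθ₀
    have := hkey θ₀
    rw [h, map_zero] at this
    have hprod : (∏ j, z (θ₀ j) ^ (lam j : ℕ)) ≠ 0 :=
      Finset.prod_ne_zero_iff.mpr fun j _ => pow_ne_zero _ (hz0 _)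
    exact (mul_eq_zero.mp this.symm).resolve_left hprod
  -- degree bound
  have hdeg : P.totalDegree ≤ d := by
    rw [hP]
    refine (MvPolynomial.totalDegree_finset_sum _ _).trans (Finset.sup_le fun t ht => ?_)
    calc (MvPolynomial.C (a t) * ∏ j, (MvPolynomial.X j : MvPolynomial (Fin k) ℂ)
            ^ ((t j + lam j).toNat)).totalDegree
        ≤ (MvPolynomial.C (a t)).totalDegree
            + (∏ j, (MvPolynomial.X j : MvPolynomial (Fin k) ℂ)
              ^ ((t j + lam j).toNat)).totalDegree := MvPolynomial.totalDegree_mul _ _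
      _ ≤ 0 + ∑ j : Fin k, ((MvPolynomial.X j : MvPolynomial (Fin k) ℂ)
              ^ ((t j + lam j).toNat)).totalDegree := by
          rw [MvPolynomial.totalDegree_C]
          gcongr
          exact MvPolynomial.totalDegree_finset_prod _ _
      _ = ∑ j : Fin k, (t j + lam j).toNat := by
          rw [zero_add]
          exact Finset.sum_congr rfl fun j _ => MvPolynomial.totalDegree_X_pow _ _
      _ ≤ ∑ j : Fin k, (lam j + (t j).toNat) := by
          apply Finset.sum_le_sum
          intro j _
          rw [Int.toNat_le]
          push_cast
          have h := Int.self_le_toNat (t j)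
          linarith
      _ = (∑ j : Fin k, lam j) + ∑ j : Fin k, (t j).toNat := Finset.sum_add_distrib
      _ ≤ d := by
          rw [hd]
          gcongr
          exact Finset.le_sup (f := fun t => ∑ j : Fin k, (t j).toNat) ht
  -- injectivity of z on S
  have hinj : Set.InjOn z S := by
    intro s hs s' hs' h
    obtain ⟨n, hn⟩ := Complex.exp_eq_exp_iff_exists_int.mp h
    have him := congrArg Complex.im hn
    simp [Complex.div_im, Complex.mul_im, Complex.mul_re] at him
    have hsr : s = s' - 4 * Real.pi * n := by
      nlinarith [him]
    obtain ⟨hs1, hs2⟩ := hS s hs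
    obtain ⟨hs1', hs2'⟩ := hS s' hs'
    have hπ := Real.pi_pos
    rcases lt_trichotomy n 0 with hn0 | hn0 | hn0
    · have hn1 : n ≤ -1 := by linarith
      have : (n : ℝ) ≤ -1 := by exact_mod_cast hn1
      nlinarith
    · simp [hn0] at hsr; linarith [hsr]
    · have : (1 : ℝ) ≤ n := by exact_mod_cast hn0
      nlinarith
  set S' : Finset ℂ := S.image z with hS'
  have hS'card : S'.card = S.card := Finset.card_image_of_injOn hinj
  -- transfer zero sets
  have htrans : ((Fintype.piFinset fun _ : Fin k => S).filter fun s => g s = 0).card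
      ≤ ((Fintype.piFinset fun _ : Fin k => S').filter
          fun x => MvPolynomial.eval x P = 0).card := by
    apply Finset.card_le_card_of_injOn (fun s j => z (s j))
    · intro s hs
      rw [Finset.mem_coe, Finset.mem_filter] at hs ⊢
      rw [Fintype.mem_piFinset] at hs ⊢
      constructor
      · intro j
        exact Finset.mem_image_of_mem z ((hs.1) j)
      · rw [hkey s, hs.2, mul_zero]
    · intro s hs s'' hs'' h
      rw [Finset.mem_coe, Finset.mem_filter, Fintype.mem_piFinset] at hs hs''
      funext j
      exact hinj (hs.1 j) (hs''.1 j) (congrFun h j)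
  have hsz := sz_aux k P hPne S'
  rcases Nat.eq_zero_or_pos S.card with h0 | hpos
  · have hsub := Finset.card_filter_le (Fintype.piFinset fun _ : Fin k => S)
      (fun s => g s = 0)
    have : (Fintype.piFinset fun _ : Fin k => S).card = 0 := by
      rw [Fintype.card_piFinset]
      simp only [Finset.prod_const, Finset.card_univ, Fintype.card_fin]
      rw [h0]
      exact zero_pow (Nat.one_le_iff_ne_zero.mp hk)
    rw [this] at hsub
    exact hsub.trans (Nat.zero_le _)
  · have hQ : ((Fintype.piFinset fun _ : Fin k => S').filter
        fun x => MvPolynomial.eval x P = 0).card ≤ d * S.card ^ (k - 1) := by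
      apply Nat.le_of_mul_le_mul_left _ hpos
      calc S.card * ((Fintype.piFinset fun _ : Fin k => S').filter
            fun x => MvPolynomial.eval x P = 0).card
          = S'.card * _ := by rw [hS'card]
        _ ≤ P.totalDegree * S'.card ^ k := hsz
        _ ≤ d * S.card ^ k := by rw [hS'card]; gcongr
        _ = S.card * (d * S.card ^ (k - 1)) := by
            have hkk : k = (k - 1) + 1 := (Nat.succ_pred_eq_of_pos hk).symm
            conv_lhs => rw [hkk, pow_succ]
            ring
    exact htrans.trans hQ
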